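/- Let A be an n×n pattern matrix and B an n×m pattern matrix. Define the pattern matrices A' ∈ {0,?}^{n×n} and B' ∈ {0,?}^{n×m} by: A'_ij = 0 if and only if A_ij = 0 (and A'_ij = ? otherwise), and B'_ij = 0 if and only if B_ij = 0 (and B'_ij = ? otherwise). Then (A,B) is weakly structurally controllable (i.e., there exist A ∈ P(A) and B ∈ P(B) such that the pair (A,B) is controllable) if and only if (A',B') is weakly structurally controllable. -/

import Mathlib

/-- The symbols of a pattern matrix: fixed zero (`0`), arbitrary nonzero (`∗`),
and arbitrary (`?`). -/
inductive PSym : Type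
  | zero
  | star
  | arb
  deriving DecidableEq

open Matrix

/-- The pattern class of a pattern matrix: real matrices that are `0` where the pattern
is `0`, nonzero where the pattern is `∗`, and unrestricted where the pattern is `?`. -/
def PatternClass {R C : Type*} (M : Matrix R C PSym) : Set (Matrix R C ℝ) :=
  {A | ∀ i j, (M i j = PSym.zero → A i j = 0) ∧ (M i j = PSym.star → A i j ≠ 0)}

/-- A pattern matrix has full row rank if every member of its pattern class
has full row rank. -/
def PatternFullRowRank {R C : Type*} [Fintype R] [Fintype C] (M : Matrix R C PSym) : Prop :=
  ∀ A ∈ PatternClass M, A.rank = Fintype.card R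

/-- Hautus test: `(A, B)` is controllable iff `[A - λI, B]` has rank `n` for all `λ ∈ ℂ`. -/
def Controllable {n m : ℕ} (A : Matrix (Fin n) (Fin n) ℝ) (B : Matrix (Fin n) (Fin m) ℝ) : Prop :=
  ∀ l : ℂ, (Matrix.fromCols (A.map (Complex.ofReal) - l • (1 : Matrix (Fin n) (Fin n) ℂ))
      (B.map (Complex.ofReal))).rank = n

/-- Hautus test for stabilizability: `[A - λI, B]` has rank `n` for all `λ` with `Re λ ≥ 0`. -/
def Stabilizable {n m : ℕ} (A : Matrix (Fin n) (Fin n) ℝ) (B : Matrix (Fin n) (Fin m) ℝ) : Prop :=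
  ∀ l : ℂ, 0 ≤ l.re →
    (Matrix.fromCols (A.map (Complex.ofReal) - l • (1 : Matrix (Fin n) (Fin n) ℂ))
      (B.map (Complex.ofReal))).rank = n

/-- Strong structural controllability of the structured system `(𝒜, ℬ)`. -/
def StrStrControllable {n m : ℕ} (𝒜 : Matrix (Fin n) (Fin n) PSym)
    (ℬ : Matrix (Fin n) (Fin m) PSym) : Prop :=
  ∀ A ∈ PatternClass 𝒜, ∀ B ∈ PatternClass ℬ, Controllable A B

/-- Strong structural stabilizability of the structured system `(𝒜, ℬ)`. -/
def StrStrStabilizable {n m : ℕ} (𝒜 : Matrix (Fin n) (Fin n) PSym)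
    (ℬ : Matrix (Fin n) (Fin m) PSym) : Prop :=
  ∀ A ∈ PatternClass 𝒜, ∀ B ∈ PatternClass ℬ, Stabilizable A B

/-- The pattern matrix `Ā` obtained from `𝒜` by replacing each diagonal entry by `∗`
if it is `0` and by `?` otherwise, keeping all off-diagonal entries. -/
def barPattern {n : ℕ} (𝒜 : Matrix (Fin n) (Fin n) PSym) : Matrix (Fin n) (Fin n) PSym :=
  fun i j => if i = j then (if 𝒜 i i = PSym.zero then PSym.star else PSym.arb) else 𝒜 i j

/-- The sets of black nodes obtainable in `G(M)` by repeatedly applying the color change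
rule, starting from the all-white coloring. The colorable nodes are the rows of `M`;
every node of `G(M)` corresponds to a column `c`, whose out-neighbors are the rows `k`
with `M k c ≠ 0`, and the edge from `c` to `k` is in `E_∗` iff `M k c = ∗`. A step colors
`j` black when some node `c` has `j` as its only white out-neighbor and `(c, j) ∈ E_∗`. -/
inductive ColorStep {R C : Type*} (M : Matrix R C PSym) : Set R → Prop
  | init : ColorStep M ∅
  | step (S : Set R) (c : C) (j : R)
      (hS : ColorStep M S)
      (hstar : M j c = PSym.star)
      (hwhite : j ∉ S)
      (huniq : ∀ k : R, M k c ≠ PSym.zero → k ∉ S → k = j) :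
      ColorStep M (insert j S)

/-- `G(M)` is colorable if all row-nodes can be colored black by repeated application
of the color change rule. -/
def PatternColorable {R C : Type*} (M : Matrix R C PSym) : Prop :=
  ColorStep M Set.univ

/-- The structured system `(𝒜, ℬ)` is weakly structurally controllable: some member of
the family is controllable. -/
def WeakStrControllable {n m : ℕ} (𝒜 : Matrix (Fin n) (Fin n) PSym)
    (ℬ : Matrix (Fin n) (Fin m) PSym) : Prop :=
  ∃ A ∈ PatternClass 𝒜, ∃ B ∈ PatternClass ℬ, Controllable A B


section AuxWCR
open Polynomial


lemma rank_eq_card_iff_vecMul {K : Type*} [Field K] {n k : Type*} [Fintype n] [Fintype k]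
    {M : Matrix n k K} :
    M.rank = Fintype.card n ↔ ∀ v : n → K, v ᵥ* M = 0 → v = 0 := by
  classical
  rw [← Matrix.rank_transpose]
  have hrn : Mᵀ.rank + Module.finrank K (LinearMap.ker Mᵀ.mulVecLin) = Fintype.card n := by
    have := LinearMap.finrank_range_add_finrank_ker Mᵀ.mulVecLin
    simpa [Matrix.rank, Module.finrank_fintype_fun_eq_card] using this
  constructor
  · intro h v hv
    have hker : Module.finrank K (LinearMap.ker Mᵀ.mulVecLin) = 0 := by omega
    have hbot : LinearMap.ker Mᵀ.mulVecLin = ⊥ := Submodule.finrank_eq_zero.mp hker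
    have hv' : v ∈ LinearMap.ker Mᵀ.mulVecLin := by
      simp [LinearMap.mem_ker, Matrix.mulVecLin_apply, Matrix.mulVec_transpose, hv]
    rw [hbot] at hv'
    simpa using hv'
  · intro h
    have hbot : LinearMap.ker Mᵀ.mulVecLin = ⊥ := by
      rw [LinearMap.ker_eq_bot']
      intro v hv
      exact h v (by simpa [Matrix.mulVecLin_apply, Matrix.mulVec_transpose] using hv)
    have hker : Module.finrank K (LinearMap.ker Mᵀ.mulVecLin) = 0 := by
      rw [hbot]; simp
    omega

lemma rank_eq_card_iff_det_ne_zero {K : Type*} [Field K] {n : Type*} [Fintype n] [DecidableEq n]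
    (M : Matrix n n K) : M.rank = Fintype.card n ↔ M.det ≠ 0 := by
  constructor
  · intro h hdet
    obtain ⟨v, hv0, hv⟩ := (Matrix.exists_mulVec_eq_zero_iff.mpr hdet)
    have : v ᵥ* Mᵀ = 0 := by rwa [← Matrix.mulVec_transpose, Matrix.transpose_transpose]
    exact hv0 (rank_eq_card_iff_vecMul.mp (by rwa [Matrix.rank_transpose]) v this)
  · intro h
    exact Matrix.rank_of_isUnit M (Matrix.isUnit_iff_isUnit_det M |>.mpr (isUnit_iff_ne_zero.mpr h))

lemma vecMul_matrix_sum {K : Type*} [CommRing K] {n k : Type*} [Fintype n] [Fintype k]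
    {ι : Type*} (s : Finset ι) (M : ι → Matrix n k K) (v : n → K) :
    v ᵥ* (∑ i ∈ s, M i) = ∑ i ∈ s, v ᵥ* (M i) := by
  ext j
  simp only [Matrix.vecMul, dotProduct, Matrix.sum_apply, Finset.sum_apply, Finset.mul_sum]
  rw [Finset.sum_comm]

lemma vecMul_smul_matrix {K : Type*} [CommRing K] {n k : Type*} [Fintype n] [Fintype k]
    (c : K) (M : Matrix n k K) (v : n → K) : v ᵥ* (c • M) = c • (v ᵥ* M) := by
  ext j
  simp [Matrix.vecMul, dotProduct, Matrix.smul_apply, Finset.mul_sum, mul_left_comm]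

/-- Cayley–Hamilton extension: vanishing of `v ᵥ* (A^k * B)` for `k < n` extends to all `k`. -/
lemma vecMul_pow_mul_eq_zero {n m : ℕ} (A : Matrix (Fin n) (Fin n) ℂ)
    (B : Matrix (Fin n) (Fin m) ℂ) (v : Fin n → ℂ)
    (h : ∀ k : ℕ, k < n → v ᵥ* (A ^ k * B) = 0) (k : ℕ) : v ᵥ* (A ^ k * B) = 0 := by
  -- Cayley–Hamilton
  have hch : A ^ n = -∑ i ∈ Finset.range n, A.charpoly.coeff i • A ^ i := by
    have h0 := A.aeval_self_charpoly
    rw [Polynomial.aeval_eq_sum_range, A.charpoly_natDegree_eq_dim, Fintype.card_fin,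
      Finset.sum_range_succ] at h0
    have hcn : A.charpoly.coeff n = 1 := by
      have := A.charpoly_monic.coeff_natDegree
      rwa [A.charpoly_natDegree_eq_dim, Fintype.card_fin] at this
    rw [hcn, one_smul] at h0
    rw [eq_neg_iff_add_eq_zero, add_comm]
    exact h0
  induction k using Nat.strong_induction_on with
  | _ k ih =>
    rcases lt_or_ge k n with hk | hk
    · exact h k hk
    · have hkn : k = (k - n) + n := by omega
      rw [hkn, pow_add, hch, mul_neg, Matrix.mul_sum, Matrix.neg_mul, Matrix.sum_mul,
        Matrix.vecMul_neg, vecMul_matrix_sum]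
      have hz : ∀ i ∈ Finset.range n,
          v ᵥ* (A ^ (k - n) * (A.charpoly.coeff i • A ^ i) * B) = 0 := by
        intro i hi
        have hlt : k - n + i < k := by
          have := Finset.mem_range.mp hi; omega
        have h0 : v ᵥ* (A ^ (k - n + i) * B) = 0 := ih _ hlt
        rw [Matrix.mul_smul, Matrix.smul_mul, vecMul_smul_matrix, ← pow_add, h0, smul_zero]
      rw [Finset.sum_congr rfl hz, Finset.sum_const_zero, neg_zero]

private def kalman {n m : ℕ} {R : Type*} [CommRing R] (A : Matrix (Fin n) (Fin n) R)
    (B : Matrix (Fin n) (Fin m) R) : Matrix (Fin n) (Fin n × Fin m) R :=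
  Matrix.of fun i p => (A ^ (p.1 : ℕ) * B) i p.2

lemma vecMul_kalman_eq_zero_iff {n m : ℕ} {R : Type*} [CommRing R]
    (A : Matrix (Fin n) (Fin n) R) (B : Matrix (Fin n) (Fin m) R) (v : Fin n → R) :
    v ᵥ* kalman A B = 0 ↔ ∀ k : Fin n, v ᵥ* (A ^ (k : ℕ) * B) = 0 := by
  constructor
  · intro h k
    ext j
    have := congrFun h (k, j)
    simpa [kalman, Matrix.vecMul, dotProduct] using this
  · intro h
    ext ⟨k, j⟩
    have := congrFun (h k) j
    simpa [kalman, Matrix.vecMul, dotProduct] using this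

lemma hautus_rank_eq_iff {n m : ℕ} (A : Matrix (Fin n) (Fin n) ℂ)
    (B : Matrix (Fin n) (Fin m) ℂ) (l : ℂ) :
    (Matrix.fromCols (A - l • (1 : Matrix (Fin n) (Fin n) ℂ)) B).rank = n ↔
    ∀ v : Fin n → ℂ, v ᵥ* A = l • v → v ᵥ* B = 0 → v = 0 := by
  have hiff := rank_eq_card_iff_vecMul (M := Matrix.fromCols (A - l • (1 : Matrix (Fin n) (Fin n) ℂ)) B)
  rw [Fintype.card_fin] at hiff
  rw [hiff]
  constructor
  · intro h v hA hB
    apply h v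
    rw [Matrix.vecMul_fromCols]
    have h1 : v ᵥ* (A - l • 1) = 0 := by
      rw [Matrix.vecMul_sub, hA]
      have : v ᵥ* (l • (1 : Matrix (Fin n) (Fin n) ℂ)) = l • v := by
        ext j; simp [Matrix.vecMul, dotProduct, Matrix.smul_apply, Matrix.one_apply,
          mul_comm, Finset.sum_ite_eq']
      rw [this, sub_self]
    rw [h1, hB]
    ext (i | i) <;> rfl
  · intro h v hv
    rw [Matrix.vecMul_fromCols] at hv
    have h1 : v ᵥ* (A - l • 1) = 0 := by
      ext j; exact congrFun hv (Sum.inl j)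
    have h2 : v ᵥ* B = 0 := by
      ext j; exact congrFun hv (Sum.inr j)
    apply h v _ h2
    rw [Matrix.vecMul_sub, sub_eq_zero] at h1
    rw [h1]
    ext j; simp [Matrix.vecMul, dotProduct, Matrix.smul_apply, Matrix.one_apply,
      mul_comm, Finset.sum_ite_eq']

lemma controllable_iff_kalman_rank {n m : ℕ} (A : Matrix (Fin n) (Fin n) ℂ)
    (B : Matrix (Fin n) (Fin m) ℂ) :
    (∀ l : ℂ, (Matrix.fromCols (A - l • (1 : Matrix (Fin n) (Fin n) ℂ)) B).rank = n) ↔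
    (kalman A B).rank = n := by
  constructor
  · -- Hautus implies Kalman full rank
    intro h
    have hiff := rank_eq_card_iff_vecMul (M := kalman A B)
    rw [Fintype.card_fin] at hiff
    rw [hiff]
    by_contra hc
    push_neg at hc
    obtain ⟨v, hv, hv0⟩ := hc
    -- v annihilates all A^k B
    have hall : ∀ k : ℕ, v ᵥ* (A ^ k * B) = 0 := by
      apply vecMul_pow_mul_eq_zero
      intro k hk
      exact (vecMul_kalman_eq_zero_iff A B v).mp hv ⟨k, hk⟩
    -- the invariant subspace
    set W : Submodule ℂ (Fin n → ℂ) :=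
      ⨅ k : ℕ, LinearMap.ker (Matrix.vecMulLinear (A ^ k * B)) with hW
    have hvW : v ∈ W := by
      rw [hW, Submodule.mem_iInf]
      intro k
      exact hall k
    have hWinv : ∀ x ∈ W, A.vecMulLinear x ∈ W := by
      intro x hx
      rw [hW, Submodule.mem_iInf] at hx ⊢
      intro k
      have := hx (k + 1)
      simp only [LinearMap.mem_ker, Matrix.vecMulLinear_apply] at this ⊢
      rw [Matrix.vecMul_vecMul, ← Matrix.mul_assoc, ← pow_succ']
      exact this
    haveI : Nontrivial W := Submodule.nontrivial_iff_ne_bot.mpr (by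
      intro hbot
      rw [hbot] at hvW
      exact hv0 (by simpa using hvW))
    let f : Module.End ℂ W := (Matrix.vecMulLinear A).restrict hWinv
    obtain ⟨μ, hμ⟩ := Module.End.exists_eigenvalue f
    obtain ⟨w, hw⟩ := hμ.exists_hasEigenvector
    have hwA : (w : Fin n → ℂ) ᵥ* A = μ • (w : Fin n → ℂ) := by
      have := hw.apply_eq_smul
      have h2 := congrArg (Subtype.val) this
      simpa [f, LinearMap.restrict_apply] using h2
    have hwB : (w : Fin n → ℂ) ᵥ* B = 0 := by
      have := (Submodule.mem_iInf _).mp w.2 0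
      simpa using this
    have hwne : (w : Fin n → ℂ) ≠ 0 := by
      intro h0
      exact hw.right (by ext; rw [h0]; rfl)
    exact hwne ((hautus_rank_eq_iff A B μ).mp (h μ) _ hwA hwB)
  · -- Kalman full rank implies Hautus
    intro h l
    rw [hautus_rank_eq_iff]
    intro v hA hB
    have hall : ∀ k : ℕ, v ᵥ* (A ^ k * B) = 0 := by
      intro k
      induction k with
      | zero => simpa using hB
      | succ k ih =>
        rw [pow_succ', Matrix.mul_assoc, ← Matrix.vecMul_vecMul, hA, Matrix.smul_vecMul, ih,
          smul_zero]
    have hiff := rank_eq_card_iff_vecMul (M := kalman A B)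
    rw [Fintype.card_fin] at hiff
    rw [hiff] at h
    exact h v ((vecMul_kalman_eq_zero_iff A B v).mpr fun k => hall k)

lemma kalman_map {n m : ℕ} {R S : Type*} [CommRing R] [CommRing S] (φ : R →+* S)
    (A : Matrix (Fin n) (Fin n) R) (B : Matrix (Fin n) (Fin m) R) :
    (kalman A B).map φ = kalman (A.map φ) (B.map φ) := by
  ext i ⟨k, j⟩
  have hpow : (A ^ (k : ℕ)).map φ = (A.map φ) ^ (k : ℕ) := by
    have := map_pow φ.mapMatrix A (k : ℕ)
    simpa [RingHom.mapMatrix_apply] using this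
  simp only [kalman, Matrix.map_apply, Matrix.of_apply]
  rw [← hpow, ← Matrix.map_mul]
  rfl

open scoped ComplexOrder in
lemma controllable_iff_gram_det {n m : ℕ} (A : Matrix (Fin n) (Fin n) ℝ)
    (B : Matrix (Fin n) (Fin m) ℝ) :
    (∀ l : ℂ, (Matrix.fromCols (A.map Complex.ofReal - l • (1 : Matrix (Fin n) (Fin n) ℂ))
      (B.map Complex.ofReal)).rank = n) ↔
    (kalman A B * (kalman A B)ᵀ).det ≠ 0 := by
  set φ : ℝ →+* ℂ := Complex.ofRealHom with hφ
  have hAm : A.map Complex.ofReal = A.map φ := rfl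
  have hBm : B.map Complex.ofReal = B.map φ := rfl
  rw [hAm, hBm, controllable_iff_kalman_rank]
  set KC := kalman (A.map φ) (B.map φ) with hKC
  have hmap : (kalman A B * (kalman A B)ᵀ).map φ = KC * KCᴴ := by
    rw [Matrix.map_mul (f := φ), kalman_map]
    congr 1
    ext i j
    simp only [Matrix.map_apply, Matrix.transpose_apply, Matrix.conjTranspose_apply, hKC,
      ← kalman_map, Complex.ofRealHom_eq_coe]
    exact (Complex.conj_ofReal _).symm
  have hdet : φ (kalman A B * (kalman A B)ᵀ).det = (KC * KCᴴ).det := by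
    rw [φ.map_det, RingHom.mapMatrix_apply, hmap]
  constructor
  · intro h
    intro h0
    have : (KC * KCᴴ).det = 0 := by rw [← hdet, h0, map_zero]
    have hr : (KC * KCᴴ).rank = Fintype.card (Fin n) := by
      rw [Matrix.rank_self_mul_conjTranspose, Fintype.card_fin]
      exact h
    rw [rank_eq_card_iff_det_ne_zero] at hr
    exact hr this
  · intro h
    have h0 : (KC * KCᴴ).det ≠ 0 := by
      rw [← hdet]
      simpa using h
    have := (rank_eq_card_iff_det_ne_zero (KC * KCᴴ)).mpr h0
    rw [Matrix.rank_self_mul_conjTranspose, Fintype.card_fin] at this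
    exact this

lemma exists_controllable_perturbation {n m : ℕ} (A E : Matrix (Fin n) (Fin n) ℝ)
    (B F : Matrix (Fin n) (Fin m) ℝ) (h : Controllable A B) :
    ∃ t : ℝ, t ≠ 0 ∧ Controllable (A + t • E) (B + t • F) := by
  classical
  set Ap : Matrix (Fin n) (Fin n) (Polynomial ℝ) := A.map C + (X : Polynomial ℝ) • E.map C
    with hAp
  set Bp : Matrix (Fin n) (Fin m) (Polynomial ℝ) := B.map C + (X : Polynomial ℝ) • F.map C
    with hBp
  set p : Polynomial ℝ := (kalman Ap Bp * (kalman Ap Bp)ᵀ).det with hp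
  have hApt : ∀ t : ℝ, Ap.map (evalRingHom t) = A + t • E := by
    intro t; ext i j
    simp only [hAp, Matrix.map_apply, Matrix.add_apply, Matrix.smul_apply, smul_eq_mul,
      coe_evalRingHom, eval_add, eval_mul, eval_C, eval_X, Pi.smul_apply]
  have hBpt : ∀ t : ℝ, Bp.map (evalRingHom t) = B + t • F := by
    intro t; ext i j
    simp only [hBp, Matrix.map_apply, Matrix.add_apply, Matrix.smul_apply, smul_eq_mul,
      coe_evalRingHom, eval_add, eval_mul, eval_C, eval_X, Pi.smul_apply]
  have heval : ∀ t : ℝ,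
      p.eval t = (kalman (A + t • E) (B + t • F) * (kalman (A + t • E) (B + t • F))ᵀ).det := by
    intro t
    have h1 : p.eval t = (evalRingHom t) p := rfl
    rw [h1, hp, RingHom.map_det, RingHom.mapMatrix_apply, Matrix.map_mul (f := evalRingHom t),
      Matrix.transpose_map, kalman_map, hApt, hBpt]
  have hp0 : p ≠ 0 := by
    intro h0
    have := heval 0
    rw [h0] at this
    simp only [Polynomial.eval_zero, zero_smul, add_zero] at this
    exact (controllable_iff_gram_det A B).mp h this.symm
  have hfin : ({t : ℝ | p.IsRoot t} ∪ {0}).Finite :=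
    (Polynomial.finite_setOf_isRoot hp0).union (Set.finite_singleton 0)
  obtain ⟨t, ht⟩ := hfin.infinite_compl.nonempty
  simp only [Set.mem_compl_iff, Set.mem_union, Set.mem_setOf_eq, Set.mem_singleton_iff,
    not_or] at ht
  refine ⟨t, ht.2, ?_⟩
  rw [show (Controllable (A + t • E) (B + t • F)) ↔ _ from
    controllable_iff_gram_det (A + t • E) (B + t • F), ← heval]
  exact ht.1

end AuxWCR

/-- **Remark 1.** Weak structural controllability of `(𝒜, ℬ)` is equivalent to that of
`(𝒜', ℬ')`, where `𝒜'` and `ℬ'` are obtained by replacing every non-`0` entry by `?`. -/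
theorem weak_controllability_reduction {n m : ℕ} (𝒜 : Matrix (Fin n) (Fin n) PSym)
    (ℬ : Matrix (Fin n) (Fin m) PSym)
    (𝒜' : Matrix (Fin n) (Fin n) PSym) (ℬ' : Matrix (Fin n) (Fin m) PSym)
    (hA' : ∀ i j, 𝒜' i j = if 𝒜 i j = PSym.zero then PSym.zero else PSym.arb)
    (hB' : ∀ i j, ℬ' i j = if ℬ i j = PSym.zero then PSym.zero else PSym.arb) :
    WeakStrControllable 𝒜 ℬ ↔ WeakStrControllable 𝒜' ℬ' := by
  constructor
  · rintro ⟨A, hA, B, hB, hc⟩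
    refine ⟨A, ?_, B, ?_, hc⟩
    · intro i j
      rw [hA' i j]
      split <;> refine ⟨?_, ?_⟩ <;> intro h <;> first
        | exact (hA i j).1 ‹_› | exact absurd h (by simp) | simp_all
    · intro i j
      rw [hB' i j]
      split <;> refine ⟨?_, ?_⟩ <;> intro h <;> first
        | exact (hB i j).1 ‹_› | exact absurd h (by simp) | simp_all
  · rintro ⟨A₀, hA0, B₀, hB0, hc⟩
    classical
    set E : Matrix (Fin n) (Fin n) ℝ :=
      Matrix.of fun i j => if 𝒜 i j = PSym.star ∧ A₀ i j = 0 then (1 : ℝ) else 0 with hE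
    set F : Matrix (Fin n) (Fin m) ℝ :=
      Matrix.of fun i j => if ℬ i j = PSym.star ∧ B₀ i j = 0 then (1 : ℝ) else 0 with hF
    obtain ⟨t, ht0, hct⟩ := exists_controllable_perturbation A₀ E B₀ F hc
    refine ⟨A₀ + t • E, ?_, B₀ + t • F, ?_, hct⟩
    · intro i j
      constructor
      · intro h
        have h0 : A₀ i j = 0 := (hA0 i j).1 (by rw [hA' i j, h]; simp)
        have hE0 : E i j = 0 := by
          rw [hE]
          simp only [Matrix.of_apply, h]
          simp
        simp [Matrix.add_apply, Matrix.smul_apply, h0, hE0]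
      · intro h
        by_cases h0 : A₀ i j = 0
        · have hE1 : E i j = 1 := by rw [hE]; simp [h, h0]
          simp [Matrix.add_apply, Matrix.smul_apply, h0, hE1, ht0]
        · have hE0 : E i j = 0 := by rw [hE]; simp [h, h0]
          simp [Matrix.add_apply, Matrix.smul_apply, hE0, h0]
    · intro i j
      constructor
      · intro h
        have h0 : B₀ i j = 0 := (hB0 i j).1 (by rw [hB' i j, h]; simp)
        have hF0 : F i j = 0 := by
          rw [hF]
          simp only [Matrix.of_apply, h]
          simp
        simp [Matrix.add_apply, Matrix.smul_apply, h0, hF0]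
      · intro h
        by_cases h0 : B₀ i j = 0
        · have hF1 : F i j = 1 := by rw [hF]; simp [h, h0]
          simp [Matrix.add_apply, Matrix.smul_apply, h0, hF1, ht0]
        · have hF0 : F i j = 0 := by rw [hF]; simp [h, h0]
          simp [Matrix.add_apply, Matrix.smul_apply, hF0, h0]
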